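/- Let n ≥ 2 and let p(X) = X^n − a_{n−1}X^{n−1} − ⋯ − a_1 X − a_0 be a monic real polynomial with companion matrix C. Then det(exp(θ • C^j)) = 1 for all θ ∈ ℝ and all j with 1 ≤ j ≤ n−1 if and only if a_1 = a_2 = ⋯ = a_{n−1} = 0. (An n-dimensional principal algebra with generator k satisfying k^n = a_{n−1}k^{n−1} + ⋯ + a_1 k + a_0 has F(e^{kθ}) = F(e^{k²θ}) = ⋯ = F(e^{k^{n−1}θ}) = 1 for all θ exactly when a_{n−1} = ⋯ = a_1 = 0.) -/

import Mathlib

open NormedSpace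

set_option maxHeartbeats 1000000

/-- The companion matrix of the monic real polynomial
`X^n + c_{n-1} X^{n-1} + ⋯ + c_1 X + c_0`: it has `1`s on the subdiagonal,
`-c i` in the last column, and `0` elsewhere. -/
def companionMatrix (n : ℕ) (c : Fin n → ℝ) : Matrix (Fin n) (Fin n) ℝ :=
  fun i j =>
    (if (i : ℕ) = (j : ℕ) + 1 then (1 : ℝ) else 0) +
      (if (j : ℕ) = n - 1 then -c i else 0)

/-! ### Auxiliary: `det (exp M) = exp (trace M)` for real matrices. -/

section DetExpAux

attribute [local instance] Matrix.linftyOpNormedRing Matrix.linftyOpNormedAlgebra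

/-- The entry-evaluation continuous linear map on matrices. -/
noncomputable def entryCLM (N : ℕ) (i j : Fin N) : Matrix (Fin N) (Fin N) ℝ →L[ℝ] ℝ :=
  LinearMap.toContinuousLinearMap
    { toFun := fun A => A i j
      map_add' := fun _ _ => rfl
      map_smul' := fun _ _ => rfl }

@[simp] lemma entryCLM_apply (N : ℕ) (i j : Fin N) (A : Matrix (Fin N) (Fin N) ℝ) :
    entryCLM N i j A = A i j := rfl

/-- The trace as a continuous linear map on matrices. -/
noncomputable def traceCLM (N : ℕ) : Matrix (Fin N) (Fin N) ℝ →L[ℝ] ℝ :=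
  LinearMap.toContinuousLinearMap (Matrix.traceLinearMap (Fin N) ℝ ℝ)

@[simp] lemma traceCLM_apply (N : ℕ) (A : Matrix (Fin N) (Fin N) ℝ) :
    traceCLM N A = A.trace := rfl

/-- The Fréchet derivative of the determinant at the identity matrix is the trace. -/
lemma hasFDerivAt_det_one (N : ℕ) :
    HasFDerivAt Matrix.det (traceCLM N) (1 : Matrix (Fin N) (Fin N) ℝ) := by
  classical
  have h1 : ∀ σ : Equiv.Perm (Fin N),
      HasFDerivAt (fun A : Matrix (Fin N) (Fin N) ℝ => ∏ i, A (σ i) i)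
        (∑ i, (∏ j ∈ Finset.univ.erase i, (1 : Matrix (Fin N) (Fin N) ℝ) (σ j) j) •
          entryCLM N (σ i) i) 1 :=
    fun σ => HasFDerivAt.finset_prod fun i _ => (entryCLM N (σ i) i).hasFDerivAt
  have h2 : HasFDerivAt (fun A : Matrix (Fin N) (Fin N) ℝ =>
        ∑ σ : Equiv.Perm (Fin N), (((Equiv.Perm.sign σ : ℤ) : ℝ)) * ∏ i, A (σ i) i)
      (∑ σ : Equiv.Perm (Fin N), (((Equiv.Perm.sign σ : ℤ) : ℝ)) •
        (∑ i, (∏ j ∈ Finset.univ.erase i, (1 : Matrix (Fin N) (Fin N) ℝ) (σ j) j) •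
          entryCLM N (σ i) i)) 1 := by
    refine HasFDerivAt.fun_sum fun σ _ => ?_
    exact (h1 σ).const_mul (((Equiv.Perm.sign σ : ℤ) : ℝ))
  have hfun : (Matrix.det : Matrix (Fin N) (Fin N) ℝ → ℝ) =
      fun A => ∑ σ : Equiv.Perm (Fin N), (((Equiv.Perm.sign σ : ℤ) : ℝ)) * ∏ i, A (σ i) i := by
    funext A
    rw [Matrix.det_apply]
    simp [Units.smul_def, zsmul_eq_mul]
  have hD : (∑ σ : Equiv.Perm (Fin N), (((Equiv.Perm.sign σ : ℤ) : ℝ)) •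
        (∑ i, (∏ j ∈ Finset.univ.erase i, (1 : Matrix (Fin N) (Fin N) ℝ) (σ j) j) •
          entryCLM N (σ i) i)) = traceCLM N := by
    apply ContinuousLinearMap.ext
    intro H
    simp only [ContinuousLinearMap.sum_apply, ContinuousLinearMap.smul_apply]
    rw [Finset.sum_eq_single (1 : Equiv.Perm (Fin N))]
    · simp only [Equiv.Perm.sign_one, Units.val_one, Int.cast_one, one_smul, entryCLM_apply,
        traceCLM_apply, smul_eq_mul, Equiv.Perm.one_apply]
      have htr : Matrix.trace H = ∑ i, H i i := rfl
      rw [htr, one_mul]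
      apply Finset.sum_congr rfl
      intro i _
      have hone : ∀ j ∈ Finset.univ.erase i,
          (1 : Matrix (Fin N) (Fin N) ℝ) ((1 : Equiv.Perm (Fin N)) j) j = 1 := fun j _ => by
        simp [Matrix.one_apply]
      rw [Finset.prod_congr rfl hone, Finset.prod_const_one, one_mul]
    · intro σ _ hσ
      have : ∀ i : Fin N,
          (∏ j ∈ Finset.univ.erase i, (1 : Matrix (Fin N) (Fin N) ℝ) (σ j) j) = 0 := by
        intro i
        obtain ⟨k, hk⟩ : ∃ k, σ k ≠ k := by
          by_contra hc
          push_neg at hc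
          exact hσ (Equiv.ext hc)
        rcases eq_or_ne k i with rfl | hki
        · refine Finset.prod_eq_zero (i := σ k) ?_ ?_
          · simp [Finset.mem_erase, hk]
          · exact Matrix.one_apply_ne (fun h => hk (σ.injective h))
        · refine Finset.prod_eq_zero (i := k) ?_ ?_
          · simp [Finset.mem_erase, hki]
          · exact Matrix.one_apply_ne hk
      simp [this]
    · intro h
      exact absurd (Finset.mem_univ _) h
  rw [hfun, ← hD]
  exact h2

/-- `det (exp M) = exp (trace M)` for real matrices. -/
theorem det_exp_eq_exp_trace {N : ℕ} (M : Matrix (Fin N) (Fin N) ℝ) :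
    (exp M).det = Real.exp M.trace := by
  set g : ℝ → ℝ := fun t => (exp (t • M)).det with hg
  have hmul : ∀ s t : ℝ, g (s + t) = g s * g t := by
    intro s t
    simp only [hg, add_smul]
    rw [Matrix.exp_add_of_commute _ _ (((Commute.refl M).smul_left s).smul_right t), Matrix.det_mul]
  have hg0 : g 0 = 1 := by simp [hg]
  have hderiv0 : HasDerivAt g M.trace 0 := by
    have hE : HasDerivAt (fun t : ℝ => exp (t • M)) M 0 := by
      have h0 := hasDerivAt_exp_smul_const (𝕂 := ℝ) M 0
      simp only [zero_smul, exp_zero, one_mul] at h0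
      exact h0
    have hdet1 : HasFDerivAt Matrix.det (traceCLM N) (exp ((0:ℝ) • M)) := by
      rw [zero_smul, exp_zero]; exact hasFDerivAt_det_one N
    have h := hdet1.comp_hasDerivAt 0 hE
    exact h
  have hderiv : ∀ t : ℝ, HasDerivAt g (g t * M.trace) t := by
    intro t
    have h1 : HasDerivAt (fun s : ℝ => g t * g s) (g t * M.trace) 0 := hderiv0.const_mul (g t)
    have h2 : HasDerivAt (fun s : ℝ => g (t + s)) (g t * M.trace) 0 := by
      have he : (fun s : ℝ => g (t + s)) = fun s : ℝ => g t * g s := funext fun s => hmul t s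
      rw [he]; exact h1
    have h2' : HasDerivAt (fun s : ℝ => g (t + s)) (g t * M.trace) (t - t) := by
      rwa [sub_self]
    have h3 := h2'.comp_sub_const (x := t) (a := t)
    have he2 : (fun u : ℝ => g (t + (u - t))) = g := by
      funext u; ring_nf
    rwa [he2] at h3
  set f : ℝ → ℝ := fun t => g t * Real.exp (-(t * M.trace)) with hf
  have hfd : ∀ t : ℝ, HasDerivAt f 0 t := by
    intro t
    have he : HasDerivAt (fun t : ℝ => Real.exp (-(t * M.trace)))
        (Real.exp (-(t * M.trace)) * -M.trace) t := by
      have hlin : HasDerivAt (fun t : ℝ => -(t * M.trace)) (-M.trace) t := by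
        exact (((hasDerivAt_id t).mul_const M.trace).neg).congr_deriv (by ring)
      exact hlin.exp
    have h := (hderiv t).mul he
    have : g t * M.trace * Real.exp (-(t * M.trace)) +
        g t * (Real.exp (-(t * M.trace)) * -M.trace) = 0 := by ring
    rwa [this] at h
  have hconst : f 1 = f 0 := by
    have hdiff : Differentiable ℝ f := fun t => (hfd t).differentiableAt
    have hzero : ∀ t, deriv f t = 0 := fun t => (hfd t).deriv
    exact is_const_of_deriv_eq_zero hdiff hzero 1 0
  have hf0 : f 0 = 1 := by simp [hf, hg0]
  have hf1 : f 1 = (exp M).det * Real.exp (-(M.trace)) := by simp [hf, hg]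
  rw [hf1, hf0] at hconst
  have hexp : Real.exp (-(M.trace)) = (Real.exp M.trace)⁻¹ := Real.exp_neg _
  rw [hexp] at hconst
  field_simp at hconst
  exact hconst

end DetExpAux

/-! ### Auxiliary: powers and traces of the companion matrix. -/

/-- Extension of the coefficient function `a` to all of `ℕ` (by zero). -/
def acoef (n : ℕ) (a : Fin n → ℝ) (m : ℕ) : ℝ :=
  if h : m < n then a ⟨m, h⟩ else 0

lemma companion_pow_apply (n : ℕ) (hn : 2 ≤ n) (a : Fin n → ℝ) (J : ℕ) (hJ : J ≤ n - 1)
    (ha : ∀ m, n - J < m → acoef n a m = 0) :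
    ∀ j, j ≤ J → ∀ i k : Fin n,
      (companionMatrix n (fun i => -a i) ^ j) i k =
        (if (i : ℕ) = (k : ℕ) + j then 1 else 0) +
        (if n ≤ (k : ℕ) + j ∧ (k : ℕ) + j ≤ (i : ℕ) + n
          then acoef n a ((i : ℕ) + n - ((k : ℕ) + j)) else 0) := by
  intro j
  induction j with
  | zero =>
    intro _ i k
    have : ¬ (n ≤ (k : ℕ) + 0) := by omega
    simp [Matrix.one_apply, Fin.ext_iff, this]
  | succ j IH =>
    intro hj i k
    have hIH := IH (Nat.le_of_succ_le hj)
    rw [pow_succ', Matrix.mul_apply]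
    have hterm : ∀ l : Fin n,
        companionMatrix n (fun i => -a i) i l * (companionMatrix n (fun i => -a i) ^ j) l k =
          (if (i : ℕ) = (l : ℕ) + 1 then (companionMatrix n (fun i => -a i) ^ j) l k else 0) +
          (if (l : ℕ) = n - 1 then a i * (companionMatrix n (fun i => -a i) ^ j) l k else 0) := by
      intro l
      simp only [companionMatrix, neg_neg]
      split_ifs <;> ring
    rw [Finset.sum_congr rfl fun l _ => hterm l, Finset.sum_add_distrib]
    have hlN : ((⟨n - 1, by omega⟩ : Fin n) : ℕ) = n - 1 := rfl
    have hsum2 : (∑ l : Fin n, if (l : ℕ) = n - 1 then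
        a i * (companionMatrix n (fun i => -a i) ^ j) l k else 0) =
        a i * (companionMatrix n (fun i => -a i) ^ j) ⟨n - 1, by omega⟩ k := by
      rw [Finset.sum_eq_single (⟨n - 1, by omega⟩ : Fin n)]
      · rw [if_pos hlN]
      · intro b _ hb
        rw [if_neg]
        intro hb'
        exact hb (by apply Fin.ext; simpa using hb')
      · intro h; exact absurd (Finset.mem_univ _) h
    rw [hsum2]
    by_cases hi0 : (i : ℕ) = 0
    · have hsum1 : (∑ l : Fin n, if (i : ℕ) = (l : ℕ) + 1 then
          (companionMatrix n (fun i => -a i) ^ j) l k else 0) = 0 := by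
        apply Finset.sum_eq_zero
        intro l _
        rw [if_neg]; omega
      rw [hsum1, hIH ⟨n - 1, by omega⟩ k, zero_add]
      try simp only [hlN]
      have h1 : ¬ ((i : ℕ) = (k : ℕ) + (j + 1)) := by omega
      rw [if_neg h1]
      rcases Nat.lt_or_ge ((k : ℕ) + j + 1) n with hc | hc
      · have h2 : ¬ (n - 1 = (k : ℕ) + j) := by omega
        rw [if_neg h2, if_neg (by omega : ¬ (n ≤ (k:ℕ) + j ∧ (k:ℕ) + j ≤ n - 1 + n)),
          if_neg (by omega : ¬ (n ≤ (k:ℕ) + (j+1) ∧ (k:ℕ) + (j+1) ≤ (i:ℕ) + n))]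
        ring
      rcases Nat.eq_or_lt_of_le hc with hc' | hc'
      · have h2 : n - 1 = (k : ℕ) + j := by omega
        rw [if_pos h2, if_neg (by omega : ¬ (n ≤ (k:ℕ) + j ∧ (k:ℕ) + j ≤ n - 1 + n)),
          if_pos (by omega : n ≤ (k:ℕ) + (j+1) ∧ (k:ℕ) + (j+1) ≤ (i:ℕ) + n)]
        have h5 : (i : ℕ) + n - ((k : ℕ) + (j + 1)) = (i : ℕ) := by omega
        rw [h5]
        have h6 : acoef n a (i : ℕ) = a i := by
          unfold acoef
          rw [dif_pos i.isLt]
        rw [h6]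
        ring
      · have h2 : ¬ (n - 1 = (k : ℕ) + j) := by omega
        rw [if_pos (by omega : n ≤ (k:ℕ) + j ∧ (k:ℕ) + j ≤ n - 1 + n), if_neg h2]
        have hz : acoef n a (n - 1 + n - ((k : ℕ) + j)) = 0 := by
          apply ha; omega
        rw [hz]
        rw [if_neg (by omega : ¬ (n ≤ (k:ℕ) + (j+1) ∧ (k:ℕ) + (j+1) ≤ (i:ℕ) + n))]
        ring
    · have hi1 : 1 ≤ (i : ℕ) := by omega
      have hsum1 : (∑ l : Fin n, if (i : ℕ) = (l : ℕ) + 1 then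
          (companionMatrix n (fun i => -a i) ^ j) l k else 0) =
          (companionMatrix n (fun i => -a i) ^ j) ⟨(i : ℕ) - 1, by omega⟩ k := by
        rw [Finset.sum_eq_single (⟨(i : ℕ) - 1, by omega⟩ : Fin n)]
        · rw [if_pos (by simp; omega)]
        · intro b _ hb
          rw [if_neg]
          intro hb'
          exact hb (by apply Fin.ext; simp; omega)
        · intro h; exact absurd (Finset.mem_univ _) h
      rw [hsum1, hIH ⟨(i : ℕ) - 1, by omega⟩ k, hIH ⟨n - 1, by omega⟩ k]
      try simp only [hlN]
      have hi' : ((⟨(i : ℕ) - 1, by omega⟩ : Fin n) : ℕ) = (i : ℕ) - 1 := rfl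
      try simp only [hi']
      rcases Nat.lt_or_ge ((k : ℕ) + j + 1) n with hc | hc
      · rw [if_neg (by omega : ¬ (n ≤ (k:ℕ) + j ∧ (k:ℕ) + j ≤ (i:ℕ) - 1 + n)),
          if_neg (by omega : ¬ (n - 1 = (k:ℕ) + j)),
          if_neg (by omega : ¬ (n ≤ (k:ℕ) + j ∧ (k:ℕ) + j ≤ n - 1 + n)),
          if_neg (by omega : ¬ (n ≤ (k:ℕ) + (j+1) ∧ (k:ℕ) + (j+1) ≤ (i:ℕ) + n))]
        have : ((i:ℕ) - 1 = (k:ℕ) + j) ↔ ((i:ℕ) = (k:ℕ) + (j+1)) := by omega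
        rw [if_congr this rfl rfl]
        ring
      rcases Nat.eq_or_lt_of_le hc with hc' | hc'
      · rw [if_neg (by omega : ¬ ((i:ℕ) - 1 = (k:ℕ) + j)),
          if_neg (by omega : ¬ (n ≤ (k:ℕ) + j ∧ (k:ℕ) + j ≤ (i:ℕ) - 1 + n)),
          if_pos (by omega : n - 1 = (k:ℕ) + j),
          if_neg (by omega : ¬ (n ≤ (k:ℕ) + j ∧ (k:ℕ) + j ≤ n - 1 + n)),
          if_neg (by omega : ¬ ((i:ℕ) = (k:ℕ) + (j+1))),
          if_pos (by omega : n ≤ (k:ℕ) + (j+1) ∧ (k:ℕ) + (j+1) ≤ (i:ℕ) + n)]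
        have h5 : (i : ℕ) + n - ((k : ℕ) + (j + 1)) = (i : ℕ) := by omega
        rw [h5]
        have h6 : acoef n a (i : ℕ) = a i := by unfold acoef; rw [dif_pos i.isLt]
        rw [h6]
        ring
      · rw [if_neg (by omega : ¬ ((i:ℕ) - 1 = (k:ℕ) + j)),
          if_neg (by omega : ¬ (n - 1 = (k:ℕ) + j)),
          if_pos (by omega : n ≤ (k:ℕ) + j ∧ (k:ℕ) + j ≤ n - 1 + n),
          if_neg (by omega : ¬ ((i:ℕ) = (k:ℕ) + (j+1)))]
        have hz : acoef n a (n - 1 + n - ((k : ℕ) + j)) = 0 := by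
          apply ha; omega
        rw [hz]
        by_cases hcc : n ≤ (k:ℕ) + j ∧ (k:ℕ) + j ≤ (i:ℕ) - 1 + n
        · rw [if_pos hcc, if_pos (by omega : n ≤ (k:ℕ) + (j+1) ∧ (k:ℕ) + (j+1) ≤ (i:ℕ) + n)]
          have : (i:ℕ) - 1 + n - ((k:ℕ) + j) = (i:ℕ) + n - ((k:ℕ) + (j+1)) := by omega
          rw [this]
          ring
        · rw [if_neg hcc,
            if_neg (by omega : ¬ (n ≤ (k:ℕ) + (j+1) ∧ (k:ℕ) + (j+1) ≤ (i:ℕ) + n))]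
          ring

lemma trace_companion_pow (n : ℕ) (hn : 2 ≤ n) (a : Fin n → ℝ) (J : ℕ)
    (hJ1 : 1 ≤ J) (hJ : J ≤ n - 1) (ha : ∀ m, n - J < m → acoef n a m = 0) :
    (companionMatrix n (fun i => -a i) ^ J).trace = J * acoef n a (n - J) := by
  have hC := companion_pow_apply n hn a J hJ ha J le_rfl
  set C := companionMatrix n (fun i => -a i) with hCdef
  have htr : (C ^ J).trace = ∑ i : Fin n, (C ^ J) i i := rfl
  rw [htr]
  have hdiag : ∀ i : Fin n, (C ^ J) i i =
      (if n - J ≤ (i : ℕ) then acoef n a (n - J) else 0) := by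
    intro i
    rw [hC i i]
    rw [if_neg (by omega : ¬ ((i:ℕ) = (i:ℕ) + J))]
    by_cases hcc : n - J ≤ (i : ℕ)
    · rw [if_pos (by omega : n ≤ (i:ℕ) + J ∧ (i:ℕ) + J ≤ (i:ℕ) + n), if_pos hcc,
        (by omega : (i:ℕ) + n - ((i:ℕ) + J) = n - J)]
      ring
    · rw [if_neg (by omega : ¬ (n ≤ (i:ℕ) + J ∧ (i:ℕ) + J ≤ (i:ℕ) + n)), if_neg hcc]
      ring
  rw [Finset.sum_congr rfl fun i _ => hdiag i]
  rw [Fin.sum_univ_eq_sum_range (fun m => if n - J ≤ m then acoef n a (n - J) else 0) n]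
  rw [Finset.sum_ite, Finset.sum_const, Finset.sum_const_zero, add_zero]
  have hfilt : (Finset.range n).filter (fun m => n - J ≤ m) = Finset.Ico (n - J) n := by
    ext m
    simp [Finset.mem_range, Finset.mem_Ico]
    omega
  rw [hfilt, Nat.card_Ico, nsmul_eq_mul]
  congr 1
  have : n - (n - J) = J := by omega
  rw [this]

/-- Let `p(X) = Xⁿ − a_{n−1}X^{n−1} − ⋯ − a₁X − a₀` (so the coefficients are `c_i = −a_i`)
with companion matrix `C`.  Then `det (exp (θ • Cʲ)) = 1` for all `θ ∈ ℝ` and all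
`1 ≤ j ≤ n−1` if and only if `a₁ = a₂ = ⋯ = a_{n−1} = 0`.  (An `n`-dimensional principal
algebra with `kⁿ = a_{n−1}k^{n−1} + ⋯ + a₁k + a₀` has `F(e^{kʲθ}) = 1` for all `θ` and all
`1 ≤ j ≤ n−1` exactly when `a_{n−1} = ⋯ = a₁ = 0`.) -/
theorem det_exp_pow_companion_iff (n : ℕ) (hn : 2 ≤ n) (a : Fin n → ℝ) :
    (∀ θ : ℝ, ∀ j : ℕ, 1 ≤ j → j ≤ n - 1 →
        (exp (θ • companionMatrix n (fun i => -a i) ^ j)).det = 1) ↔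
      (∀ i : Fin n, 1 ≤ (i : ℕ) → a i = 0) := by
  have hde : ∀ (θ : ℝ) (M : Matrix (Fin n) (Fin n) ℝ),
      (exp (θ • M)).det = Real.exp (θ * M.trace) := by
    intro θ M
    rw [det_exp_eq_exp_trace (θ • M), Matrix.trace_smul, smul_eq_mul]
  constructor
  · intro h
    have htr : ∀ j : ℕ, 1 ≤ j → j ≤ n - 1 →
        (companionMatrix n (fun i => -a i) ^ j).trace = 0 := by
      intro j h1 h2
      have h3 := h 1 j h1 h2
      rw [hde 1 _, one_mul] at h3
      have h4 : Real.exp ((companionMatrix n (fun i => -a i) ^ j).trace) = Real.exp 0 := by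
        rw [Real.exp_zero]; exact h3
      exact Real.exp_injective h4
    have key : ∀ J : ℕ, 1 ≤ J → J ≤ n - 1 → acoef n a (n - J) = 0 := by
      intro J
      induction J using Nat.strong_induction_on with
      | _ J IHs =>
        intro hJ1 hJn
        have haJ : ∀ m, n - J < m → acoef n a m = 0 := by
          intro m hm
          by_cases hmn : m < n
          · have h1 : n - (n - m) = m := by omega
            have h2 := IHs (n - m) (by omega) (by omega) (by omega)
            rwa [h1] at h2
          · unfold acoef
            rw [dif_neg hmn]
        have h4 := trace_companion_pow n hn a J hJ1 hJn haJ
        rw [htr J hJ1 hJn] at h4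
        have hJ0 : (J : ℝ) ≠ 0 := by
          simp only [ne_eq, Nat.cast_eq_zero]
          omega
        rcases mul_eq_zero.mp h4.symm with hc | hc
        · exact absurd hc hJ0
        · exact hc
    intro i hi
    have h1 : n - (n - (i : ℕ)) = (i : ℕ) := by omega
    have h2 := key (n - (i : ℕ)) (by omega) (by omega)
    rw [h1] at h2
    unfold acoef at h2
    rw [dif_pos i.isLt] at h2
    simpa using h2
  · intro h θ j hj1 hj2
    have haj : ∀ m, n - j < m → acoef n a m = 0 := by
      intro m hm
      unfold acoef
      split
      · next hmn => exact h ⟨m, hmn⟩ (by simp; omega)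
      · rfl
    rw [hde, trace_companion_pow n hn a j hj1 hj2 haj]
    have hz : acoef n a (n - j) = 0 := by
      unfold acoef
      rw [dif_pos (by omega : n - j < n)]
      exact h ⟨n - j, by omega⟩ (by simp; omega)
    rw [hz, mul_zero, mul_zero, Real.exp_zero]
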